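/- arXiv:2605.09456 — 2 statements merged into one kernel-verified Lean document; each statement's English description precedes it below -/
import Mathlib

section
/- Let ρ and π be probability density functions on a probability (or finite measure) space, with π bounded below by λ > 0. Then the relative entropy satisfies H(ρ|π) := ∫ ρ·log(ρ/π) ≤ (1/λ)·∫ (ρ − π)², i.e. the relative entropy is bounded above by λ⁻¹ times the squared L²-distance. -/
open MeasureTheory

/-- Let `ρ` and `π` be probability densities on a finite measure space, with `π` bounded
below by `lam > 0`.  Then the relative entropy `H(ρ|π) = ∫ ρ log(ρ/π)` is bounded above
by `lam⁻¹` times the squared `L²`-distance between `ρ` and `π`. -/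
theorem relEntropy_le_L2 {X : Type*} [MeasurableSpace X] (μ : Measure X) [IsFiniteMeasure μ]
    (ρ π : X → ℝ) (lam : ℝ) (hlam : 0 < lam)
    (hρmeas : Measurable ρ) (hπmeas : Measurable π)
    (hρ0 : ∀ᵐ x ∂μ, 0 ≤ ρ x) (hπlam : ∀ᵐ x ∂μ, lam ≤ π x)
    (hρ1 : ∫ x, ρ x ∂μ = 1) (hπ1 : ∫ x, π x ∂μ = 1)
    (hρL2 : MemLp ρ 2 μ) (hπL2 : MemLp π 2 μ)
    (hint : Integrable (fun x => ρ x * Real.log (ρ x / π x)) μ) :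
    ∫ x, ρ x * Real.log (ρ x / π x) ∂μ ≤ (1 / lam) * ∫ x, (ρ x - π x) ^ 2 ∂μ := by
  have hsq : Integrable (fun x => (ρ x - π x) ^ 2) μ := by
    have := (hρL2.sub hπL2)
    simpa [sq] using this.integrable_sq
  have hρint : Integrable ρ μ := hρL2.integrable (by norm_num)
  have hπint : Integrable π μ := hπL2.integrable (by norm_num)
  have hdiff : Integrable (fun x => ρ x - π x) μ := hρint.sub hπint
  have hg : Integrable (fun x => (ρ x - π x) ^ 2 / lam + (ρ x - π x)) μ :=
    (hsq.div_const lam).add hdiff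
  have hmono : ∫ x, ρ x * Real.log (ρ x / π x) ∂μ ≤
      ∫ x, ((ρ x - π x) ^ 2 / lam + (ρ x - π x)) ∂μ := by
    refine integral_mono_ae hint hg ?_
    filter_upwards [hρ0, hπlam] with x hρx hπx
    have hπpos : 0 < π x := lt_of_lt_of_le hlam hπx
    rcases eq_or_lt_of_le hρx with h0 | hρpos
    · rw [← h0]
      have h1 : 1 ≤ π x / lam := (one_le_div hlam).mpr hπx
      have : π x ≤ π x ^ 2 / lam := by
        calc π x = π x * 1 := by ring
        _ ≤ π x * (π x / lam) := by
            exact mul_le_mul_of_nonneg_left h1 hπpos.le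
        _ = π x ^ 2 / lam := by ring
      simp only [zero_mul]
      have h2 : (0 - π x) ^ 2 / lam + (0 - π x) = π x ^ 2 / lam - π x := by ring
      rw [h2]
      linarith
    · have hlog : Real.log (ρ x / π x) ≤ ρ x / π x - 1 :=
        Real.log_le_sub_one_of_pos (div_pos hρpos hπpos)
      have h1 : ρ x * Real.log (ρ x / π x) ≤ ρ x * (ρ x / π x - 1) :=
        mul_le_mul_of_nonneg_left hlog hρx
      have h2 : ρ x * (ρ x / π x - 1) = (ρ x - π x) ^ 2 / π x + (ρ x - π x) := by
        field_simp
        ring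
      have h3 : (ρ x - π x) ^ 2 / π x ≤ (ρ x - π x) ^ 2 / lam :=
        div_le_div_of_nonneg_left (sq_nonneg _) hlam hπx |>.trans_eq rfl
      linarith [h1, h2 ▸ h1]
  have hzero : ∫ x, (ρ x - π x) ∂μ = 0 := by
    rw [integral_sub hρint hπint, hρ1, hπ1]; ring
  calc ∫ x, ρ x * Real.log (ρ x / π x) ∂μ
      ≤ ∫ x, ((ρ x - π x) ^ 2 / lam + (ρ x - π x)) ∂μ := hmono
    _ = (∫ x, (ρ x - π x) ^ 2 ∂μ) / lam + ∫ x, (ρ x - π x) ∂μ := by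
        rw [integral_add (hsq.div_const lam) hdiff, integral_div]
    _ = (1 / lam) * ∫ x, (ρ x - π x) ^ 2 ∂μ := by rw [hzero]; ring
end

section
/- Let ρ and π be probability density functions on a finite measure space, both bounded above by Λ. Then the relative entropy satisfies H(ρ|π) ≥ (1/(2Λ))·∫ (ρ − π)². -/
open MeasureTheory

private 
lemma aux1 (r : ℝ) (hr0 : 0 ≤ r) (hr1 : r ≤ 1) :
    (r - 1)^2 / 2 ≤ r * Real.log r - r + 1 := by
  rcases eq_or_lt_of_le hr0 with h0 | h0
  · simp [← h0]; nlinarith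
  rcases eq_or_lt_of_le hr1 with h1 | h1
  · simp [h1]
  set g : ℝ → ℝ := fun t => t * Real.log t - t + 1 - (t - 1)^2 / 2 with hg
  have hderiv : ∀ t ∈ Set.Ioo r 1, HasDerivAt g (Real.log t - t + 1) t := by
    intro t ht
    have ht0 : t ≠ 0 := ne_of_gt (lt_trans h0 ht.1)
    have h := (Real.hasDerivAt_mul_log ht0).sub (hasDerivAt_id t)
    have h2 := h.add_const 1
    have h3 : HasDerivAt (fun t : ℝ => (t - 1)^2 / 2) ((2 * (t-1)^1 * 1)/2) t := by
      exact (((hasDerivAt_id t).sub_const 1).pow 2).div_const 2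
    have := h2.sub h3
    refine this.congr_deriv (by ring)
  have hanti : AntitoneOn g (Set.Icc r 1) := by
    apply antitoneOn_of_deriv_nonpos (convex_Icc r 1)
    · apply ContinuousOn.sub
      apply ContinuousOn.add
      apply ContinuousOn.sub
      · exact Real.continuous_mul_log.continuousOn
      · exact continuousOn_id
      · exact continuousOn_const
      · exact ((continuousOn_id.sub continuousOn_const).pow 2).div_const 2
    · rw [interior_Icc]
      intro t ht
      exact ((hderiv t ht).differentiableAt).differentiableWithinAt
    · rw [interior_Icc]
      intro t ht
      rw [(hderiv t ht).deriv]
      have : Real.log t ≤ t - 1 := Real.log_le_sub_one_of_pos (lt_trans h0 ht.1)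
      linarith
  have := hanti (Set.left_mem_Icc.mpr hr1) (Set.right_mem_Icc.mpr hr1) hr1
  simp [hg] at this
  nlinarith

private 
lemma aux2 (r : ℝ) (hr : 1 ≤ r) :
    (r - 1)^2 / (2 * r) ≤ r * Real.log r - r + 1 := by
  rcases eq_or_lt_of_le hr with h1 | h1
  · simp [← h1]
  set f : ℝ → ℝ := fun t => t * Real.log t - t + 1 - (t - 1)^2 / (2 * t) with hf
  have hderiv : ∀ t ∈ Set.Ioo 1 r, HasDerivAt f (Real.log t - 1/2 + 1/(2*t^2)) t := by
    intro t ht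
    have ht0 : (0:ℝ) < t := lt_trans one_pos ht.1
    have h := ((Real.hasDerivAt_mul_log (ne_of_gt ht0)).sub (hasDerivAt_id t)).add_const 1
    have hnum : HasDerivAt (fun t : ℝ => (t - 1)^2) (2 * (t-1)^1 * 1) t :=
      ((hasDerivAt_id t).sub_const 1).pow 2
    have hden : HasDerivAt (fun t : ℝ => 2 * t) 2 t := by
      simpa using (hasDerivAt_id t).const_mul (2:ℝ)
    have h3 : HasDerivAt (fun t : ℝ => (t - 1)^2 / (2 * t))
        ((2 * (t-1)^1 * 1 * (2*t) - (t-1)^2 * 2) / (2*t)^2) t :=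
      hnum.div hden (by positivity)
    have := h.sub h3
    refine this.congr_deriv (by field_simp; ring)
  have hmono : MonotoneOn f (Set.Icc 1 r) := by
    apply monotoneOn_of_deriv_nonneg (convex_Icc 1 r)
    · apply ContinuousOn.sub
      · exact (Real.continuous_mul_log.continuousOn.sub continuousOn_id).add continuousOn_const
      · apply ContinuousOn.div
        · exact (continuousOn_id.sub continuousOn_const).pow 2
        · exact continuousOn_const.mul continuousOn_id
        · intro t ht
          have : (0:ℝ) < t := lt_of_lt_of_le one_pos ht.1
          positivity
    · rw [interior_Icc]
      intro t ht
      exact ((hderiv t ht).differentiableAt).differentiableWithinAt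
    · rw [interior_Icc]
      intro t ht
      rw [(hderiv t ht).deriv]
      have ht1 : (1:ℝ) < t := ht.1
      have ht0 : (0:ℝ) < t := lt_trans one_pos ht1
      have hlog : 1 - 1/t ≤ Real.log t := by
        have := Real.log_le_sub_one_of_pos (show (0:ℝ) < 1/t by positivity)
        rw [Real.log_div one_ne_zero (ne_of_gt ht0), Real.log_one] at this
        linarith
      have : 1/2 - 1/(2*t^2) ≤ 1 - 1/t := by
        rw [div_sub_div _ _ two_ne_zero (by positivity : (2:ℝ)*t^2 ≠ 0),
          div_le_iff₀ (by positivity : (0:ℝ) < 2*(2*t^2))]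
        have hc : t * (1/t) = 1 := mul_one_div_cancel (ne_of_gt ht0)
        nlinarith [sq_nonneg (t - 1), mul_pos ht0 ht0]
      linarith
  have := hmono (Set.left_mem_Icc.mpr hr) (Set.right_mem_Icc.mpr hr) hr
  simp [hf] at this
  nlinarith

private lemma pt (a b Λ : ℝ) (ha : 0 ≤ a) (hb : 0 < b) (haΛ : a ≤ Λ) (hbΛ : b ≤ Λ) :
    (a - b)^2 / (2 * Λ) ≤ a * Real.log (a / b) - a + b := by
  have hΛ : 0 < Λ := lt_of_lt_of_le hb hbΛ
  have hb' : b ≠ 0 := ne_of_gt hb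
  rcases le_total a b with hab | hab
  · have hr0 : 0 ≤ a / b := by positivity
    have hr1 : a / b ≤ 1 := (div_le_one hb).mpr hab
    have key := aux1 (a/b) hr0 hr1
    have key2 := mul_le_mul_of_nonneg_left key (le_of_lt hb)
    have heq1 : b * ((a/b - 1)^2 / 2) = (a - b)^2 / (2 * b) := by
      field_simp
    have heq2 : b * (a/b * Real.log (a/b) - a/b + 1) = a * Real.log (a/b) - a + b := by
      field_simp
    rw [heq1, heq2] at key2
    have : (a - b)^2 / (2 * Λ) ≤ (a - b)^2 / (2 * b) :=
      div_le_div_of_nonneg_left (sq_nonneg _) (by positivity) (by linarith)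
    linarith
  · have ha0 : 0 < a := lt_of_lt_of_le hb hab
    have hr : 1 ≤ a / b := (one_le_div hb).mpr hab
    have key := aux2 (a/b) hr
    have key2 := mul_le_mul_of_nonneg_left key (le_of_lt hb)
    have heq1 : b * ((a/b - 1)^2 / (2 * (a/b))) = (a - b)^2 / (2 * a) := by
      field_simp
    have heq2 : b * (a/b * Real.log (a/b) - a/b + 1) = a * Real.log (a/b) - a + b := by
      field_simp
    rw [heq1, heq2] at key2
    have : (a - b)^2 / (2 * Λ) ≤ (a - b)^2 / (2 * a) :=
      div_le_div_of_nonneg_left (sq_nonneg _) (by positivity) (by linarith)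
    linarith

/-- Let `ρ` and `π` be probability densities on a finite measure space, both bounded above
by `Λ`.  Then the relative entropy satisfies `H(ρ|π) ≥ (1/(2Λ)) ∫ (ρ − π)²`. -/
theorem relEntropy_ge_L2 {X : Type*} [MeasurableSpace X] (μ : Measure X) [IsFiniteMeasure μ]
    (ρ π : X → ℝ) (Λ : ℝ) (hΛ : 0 < Λ)
    (hρmeas : Measurable ρ) (hπmeas : Measurable π)
    (hρ0 : ∀ᵐ x ∂μ, 0 ≤ ρ x) (hπ0 : ∀ᵐ x ∂μ, 0 < π x)
    (hρΛ : ∀ᵐ x ∂μ, ρ x ≤ Λ) (hπΛ : ∀ᵐ x ∂μ, π x ≤ Λ)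
    (hρ1 : ∫ x, ρ x ∂μ = 1) (hπ1 : ∫ x, π x ∂μ = 1)
    (hint : Integrable (fun x => ρ x * Real.log (ρ x / π x)) μ)
    (hsq : Integrable (fun x => (ρ x - π x) ^ 2) μ) :
    (1 / (2 * Λ)) * ∫ x, (ρ x - π x) ^ 2 ∂μ ≤ ∫ x, ρ x * Real.log (ρ x / π x) ∂μ := by
  have hρint : Integrable ρ μ := by
    refine Integrable.mono' (integrable_const Λ) hρmeas.aestronglyMeasurable ?_
    filter_upwards [hρ0, hρΛ] with x h1 h2
    rw [Real.norm_eq_abs, abs_of_nonneg h1]; exact h2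
  have hπint : Integrable π μ := by
    refine Integrable.mono' (integrable_const Λ) hπmeas.aestronglyMeasurable ?_
    filter_upwards [hπ0, hπΛ] with x h1 h2
    rw [Real.norm_eq_abs, abs_of_nonneg h1.le]; exact h2
  have hrhs : Integrable (fun x => ρ x * Real.log (ρ x / π x) - ρ x + π x) μ :=
    (hint.sub hρint).add hπint
  have hlhs : Integrable (fun x => (ρ x - π x)^2 / (2 * Λ)) μ := hsq.div_const _
  have hae : ∀ᵐ x ∂μ, (ρ x - π x)^2 / (2 * Λ) ≤ ρ x * Real.log (ρ x / π x) - ρ x + π x := by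
    filter_upwards [hρ0, hπ0, hρΛ, hπΛ] with x h1 h2 h3 h4
    exact pt _ _ _ h1 h2 h3 h4
  have hmono := integral_mono_ae hlhs hrhs hae
  rw [integral_div] at hmono
  have heq : ∫ x, (ρ x * Real.log (ρ x / π x) - ρ x + π x) ∂μ
      = (∫ x, ρ x * Real.log (ρ x / π x) ∂μ) - 1 + 1 := by
    have h1 : Integrable (fun x => ρ x * Real.log (ρ x / π x) - ρ x) μ := hint.sub hρint
    rw [integral_add h1 hπint, integral_sub hint hρint, hρ1, hπ1]
  rw [heq] at hmono
  rw [one_div, ← div_eq_inv_mul]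
  linarith
end
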